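/- Let α ≥ 0, k a positive integer, and p a real polynomial with p(0) ≠ 0. Let Λ(q) = x·q'' + (α+1)·q' and P_h(x) = exp(-hΛ)(x^k p(x)). Then P_h(εh)/h^k is a polynomial in h whose value at h = 0 equals p(0)·(-1)^k k! L_k^α(ε). -/

import Mathlib

open Polynomial

/-- The operator Λ = x·d²/dx² + (α+1)·d/dx on real polynomials. -/
noncomputable def Lam (α : ℝ) (q : ℝ[X]) : ℝ[X] :=
  X * derivative (derivative q) + C (α + 1) * derivative q

/-- The (finite) operator exponential `exp(-hΛ)q = ∑_{j=0}^{deg q} (-h)^j Λ^j(q)/j!`. -/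
noncomputable def expL (α h : ℝ) (q : ℝ[X]) : ℝ[X] :=
  ∑ j ∈ Finset.range (q.natDegree + 1),
    C ((-h) ^ j / (Nat.factorial j)) * (Lam α)^[j] q

/-- The generalized Laguerre polynomial
`L_k^α(x) = ∑_{i=0}^k (-1)^i (Γ(k+α+1)/(Γ(α+i+1)(k-i)!)) x^i / i!`. -/
noncomputable def lag (α : ℝ) (k : ℕ) : ℝ[X] :=
  ∑ i ∈ Finset.range (k + 1),
    C ((-1 : ℝ) ^ i * (Real.Gamma ((k : ℝ) + α + 1) /
        (Real.Gamma (α + i + 1) * (Nat.factorial (k - i)))) / (Nat.factorial i)) * X ^ i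

lemma lam_coeff (α : ℝ) (r : ℝ[X]) (m : ℕ) :
    (Lam α r).coeff m = ((m:ℝ)+1) * ((m:ℝ)+α+1) * r.coeff (m+1) := by
  unfold Lam
  cases m with
  | zero =>
    simp [coeff_derivative]
  | succ n =>
    simp only [coeff_add, coeff_C_mul, coeff_X_mul, coeff_derivative]
    push_cast
    ring

lemma iter_coeff (α : ℝ) (q : ℝ[X]) : ∀ (j m : ℕ),
    ((Lam α)^[j] q).coeff m =
      (∏ t ∈ Finset.range j, (((m:ℝ)+t+1) * ((m:ℝ)+t+α+1))) * q.coeff (m+j) := by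
  intro j
  induction j with
  | zero => simp
  | succ j ih =>
    intro m
    rw [Function.iterate_succ_apply', lam_coeff, ih (m+1)]
    have hprod : (∏ t ∈ Finset.range j, ((((m+1:ℕ)):ℝ)+t+1) * ((((m+1:ℕ)):ℝ)+t+α+1))
        = ∏ t ∈ Finset.range j, (((m:ℝ)+((t+1:ℕ):ℝ)+1) * ((m:ℝ)+((t+1:ℕ):ℝ)+α+1)) := by
      refine Finset.prod_congr rfl fun t _ => ?_
      push_cast; ring
    rw [hprod, Finset.prod_range_succ', show m + 1 + j = m + (j+1) by omega]
    push_cast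
    ring

lemma prodval (α : ℝ) (hα : 0 ≤ α) (k : ℕ) : ∀ j, j ≤ k →
    (∏ t ∈ Finset.range j, ((((k-j:ℕ):ℝ)+t+1) * (((k-j:ℕ):ℝ)+t+α+1)))
      = ((k.factorial : ℝ) / ((k-j).factorial : ℝ)) *
        (Real.Gamma ((k:ℝ)+α+1) / Real.Gamma (((k-j:ℕ):ℝ)+α+1)) := by
  intro j
  induction j with
  | zero =>
    intro _
    simp [div_self (by positivity : (k.factorial:ℝ) ≠ 0),
      div_self (Real.Gamma_pos_of_pos (by positivity : (0:ℝ) < (k:ℝ)+α+1)).ne']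
  | succ j ih =>
    intro hjk
    have hjk' : j ≤ k := by omega
    have hsub : k - (j+1) + 1 = k - j := by omega
    have hprod : (∏ t ∈ Finset.range j, ((((k-(j+1):ℕ):ℝ)+((t+1:ℕ):ℝ)+1) *
          ((((k-(j+1):ℕ)):ℝ)+((t+1:ℕ):ℝ)+α+1)))
        = ∏ t ∈ Finset.range j, ((((k-j:ℕ):ℝ)+t+1) * (((k-j:ℕ):ℝ)+t+α+1)) := by
      refine Finset.prod_congr rfl fun t _ => ?_
      rw [← hsub]
      push_cast; ring
    rw [Finset.prod_range_succ', hprod, ih hjk']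
    have hcast : ((k-j:ℕ):ℝ) = ((k-(j+1):ℕ):ℝ) + 1 := by
      rw [← hsub]; push_cast; ring
    have hGpos : (0:ℝ) < ((k-(j+1):ℕ):ℝ) + α + 1 := by positivity
    have hG : Real.Gamma (((k-j:ℕ):ℝ)+α+1)
        = (((k-(j+1):ℕ):ℝ)+α+1) * Real.Gamma (((k-(j+1):ℕ):ℝ)+α+1) := by
      rw [hcast, show ((k-(j+1):ℕ):ℝ) + 1 + α + 1 = (((k-(j+1):ℕ):ℝ)+α+1) + 1 by ring,
        Real.Gamma_add_one hGpos.ne']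
    have hfac : ((k-j).factorial : ℝ) = (((k-(j+1):ℕ):ℝ)+1) * ((k-(j+1)).factorial : ℝ) := by
      rw [← hsub, Nat.factorial_succ]; push_cast; ring
    rw [hG, hfac]
    have h1 : ((k-(j+1)).factorial : ℝ) ≠ 0 := by positivity
    have h2 : Real.Gamma (((k-(j+1):ℕ):ℝ)+α+1) ≠ 0 :=
      (Real.Gamma_pos_of_pos hGpos).ne'
    have h3 : (((k-(j+1):ℕ):ℝ)+1) ≠ 0 := by positivity
    have h4 : (((k-(j+1):ℕ):ℝ)+α+1) ≠ 0 := hGpos.ne'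
    generalize ((k-(j+1):ℕ):ℝ) = c at *
    simp only [Nat.cast_zero]
    field_simp
    ring

/-- `P_h(εh)/h^k` is a polynomial in `h` (with coefficients polynomial in `ε`) whose
value at `h = 0` is `p(0)·(-1)^k k! L_k^α(ε)`. -/
theorem stmt_13 (α : ℝ) (hα : 0 ≤ α) (k : ℕ) (hk : 1 ≤ k)
    (p : ℝ[X]) (hp : p.eval 0 ≠ 0) :
    ∃ Q : Polynomial ℝ[X],
      (∀ h : ℝ, h ≠ 0 → ∀ ε : ℝ,
        (Q.eval (C h)).eval ε = (expL α h (X ^ k * p)).eval (ε * h) / h ^ k) ∧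
      Q.coeff 0 = C (p.eval 0 * (-1 : ℝ) ^ k * (Nat.factorial k)) * lag α k := by
  set q : ℝ[X] := X ^ k * p with hq
  have hp0 : p ≠ 0 := fun hz => hp (by simp [hz])
  have hqdeg : q.natDegree = k + p.natDegree := by
    rw [hq, natDegree_mul (pow_ne_zero k X_ne_zero) hp0, natDegree_X_pow]
  set N := q.natDegree + 1 with hN
  have hkN : k < N := by omega
  -- the big polynomial in h (outer variable) with coefficients in ε (inner variable)
  set R : Polynomial ℝ[X] := ∑ j ∈ Finset.range N, ∑ m ∈ Finset.range N,
      C (C ((-1:ℝ)^j / (j.factorial : ℝ) * ((Lam α)^[j] q).coeff m) * X ^ m) * X ^ (j+m)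
    with hR
  have hcoeffR : ∀ d, R.coeff d = ∑ j ∈ Finset.range N, ∑ m ∈ Finset.range N,
      if j + m = d then C ((-1:ℝ)^j / (j.factorial : ℝ) * ((Lam α)^[j] q).coeff m) * X ^ m
      else 0 := by
    intro d
    rw [hR, finset_sum_coeff]
    refine Finset.sum_congr rfl fun j _ => ?_
    rw [finset_sum_coeff]
    refine Finset.sum_congr rfl fun m _ => ?_
    rw [coeff_C_mul, coeff_X_pow]
    by_cases hcond : j + m = d
    · simp [hcond]
    · rw [if_neg (fun hdd => hcond hdd.symm), if_neg hcond, mul_zero]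
  have hqc : ∀ d, d < k → q.coeff d = 0 := by
    intro d hd
    exact X_pow_dvd_iff.mp (dvd_mul_right _ _) d hd
  have hdvd : X ^ k ∣ R := by
    rw [X_pow_dvd_iff]
    intro d hd
    rw [hcoeffR]
    refine Finset.sum_eq_zero fun j _ => Finset.sum_eq_zero fun m _ => ?_
    split_ifs with hcond
    · rw [iter_coeff, show m + j = d by omega, hqc d hd, mul_zero]
      simp
    · rfl
  obtain ⟨Q, hQ⟩ := hdvd
  have hiterdeg : ∀ j : ℕ, ((Lam α)^[j] q).natDegree < N := by
    intro j
    have : ((Lam α)^[j] q).natDegree ≤ q.natDegree := by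
      rw [natDegree_le_iff_coeff_eq_zero]
      intro M hM
      rw [iter_coeff]
      have : q.coeff (M + j) = 0 := coeff_eq_zero_of_natDegree_lt (by omega)
      rw [this, mul_zero]
    rw [hN]
    exact Nat.lt_succ_of_le this
  refine ⟨Q, fun h hh ε => ?_, ?_⟩
  · -- evaluation identity
    have hevalR : (R.eval (C h)).eval ε
        = ∑ j ∈ Finset.range N, ∑ m ∈ Finset.range N,
            ((-1:ℝ)^j / (j.factorial : ℝ) * ((Lam α)^[j] q).coeff m) * ε ^ m * h ^ (j+m) := by
      rw [hR, eval_finset_sum]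
      rw [eval_finset_sum]
      refine Finset.sum_congr rfl fun j _ => ?_
      rw [eval_finset_sum, eval_finset_sum]
      refine Finset.sum_congr rfl fun m _ => ?_
      simp [mul_pow]
    have hexp : (expL α h q).eval (ε * h)
        = ∑ j ∈ Finset.range N, ∑ m ∈ Finset.range N,
            ((-1:ℝ)^j / (j.factorial : ℝ) * ((Lam α)^[j] q).coeff m) * ε ^ m * h ^ (j+m) := by
      rw [expL, eval_finset_sum]
      refine Finset.sum_congr rfl fun j _ => ?_
      rw [eval_mul, eval_C, eval_eq_sum_range' (hiterdeg j) (ε * h), Finset.mul_sum]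
      refine Finset.sum_congr rfl fun m _ => ?_
      rw [mul_pow, pow_add, neg_pow]
      ring
    have hRQ : (R.eval (C h)).eval ε = h ^ k * (Q.eval (C h)).eval ε := by
      rw [hQ]
      simp [eval_pow]
    rw [eq_div_iff (pow_ne_zero k hh)]
    rw [hexp, ← hevalR, hRQ]
    ring
  · -- constant coefficient
    have hQ0 : Q.coeff 0 = R.coeff k := by
      rw [hQ, ← coeff_X_pow_mul Q k 0, zero_add]
    rw [hQ0, hcoeffR]
    have hinner : ∀ j ∈ Finset.range N,
        (∑ m ∈ Finset.range N,
          if j + m = k then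
            C ((-1:ℝ)^j / (j.factorial : ℝ) * ((Lam α)^[j] q).coeff m) * X ^ m else 0)
        = if j ≤ k then
            C ((-1:ℝ)^j / (j.factorial : ℝ) * ((Lam α)^[j] q).coeff (k-j)) * X ^ (k-j)
          else 0 := by
      intro j _
      split_ifs with hjk
      · rw [Finset.sum_eq_single_of_mem (k - j) (Finset.mem_range.mpr (by omega))]
        · rw [if_pos (by omega)]
        · intro m _ hm
          rw [if_neg (by omega)]
      · refine Finset.sum_eq_zero fun m _ => ?_
        rw [if_neg (by omega)]
    rw [Finset.sum_congr rfl hinner]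
    rw [← Finset.sum_subset (Finset.range_subset_range.mpr (show k + 1 ≤ N by omega))
      (fun j _ hj => if_neg (by simp only [Finset.mem_range] at hj; omega))]
    rw [Finset.sum_congr rfl (fun j hj => if_pos (by simpa using Nat.lt_succ_iff.mp (Finset.mem_range.mp hj)))]
    rw [← Finset.sum_range_reflect]
    rw [lag, Finset.mul_sum]
    refine Finset.sum_congr rfl fun i hi => ?_
    have hik : i ≤ k := Nat.lt_succ_iff.mp (Finset.mem_range.mp hi)
    have e1 : k + 1 - 1 - i = k - i := by omega
    have e2 : k - (k - i) = i := by omega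
    rw [e1, e2, iter_coeff, show i + (k - i) = k by omega]
    have hq0 : q.coeff k = p.eval 0 := by
      have h5 := coeff_X_pow_mul p k 0
      rw [zero_add] at h5
      rw [hq, h5, coeff_zero_eq_eval_zero]
    rw [hq0]
    have hpv := prodval α hα k (k - i) (by omega)
    rw [e2] at hpv
    rw [hpv, ← mul_assoc (C (eval 0 p * (-1:ℝ)^k * (k.factorial:ℝ))), ← C_mul]
    congr 1
    rw [C_inj]
    have hsgn : (-1:ℝ)^(k-i) = (-1:ℝ)^k * (-1:ℝ)^i := by
      have h11 : (-1:ℝ)^(k-i) * (-1:ℝ)^i = (-1:ℝ)^k := by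
        rw [← pow_add, show k - i + i = k by omega]
      have h12 : (-1:ℝ)^i * (-1:ℝ)^i = 1 := by
        rw [← pow_add, show i + i = 2 * i by ring, pow_mul]
        norm_num
      calc (-1:ℝ)^(k-i) = (-1:ℝ)^(k-i) * ((-1:ℝ)^i * (-1:ℝ)^i) := by rw [h12, mul_one]
        _ = (-1:ℝ)^k * (-1:ℝ)^i := by rw [← mul_assoc, h11]
    have hGpos : (0:ℝ) < (i:ℝ) + α + 1 := by positivity
    have hG2 : Real.Gamma (α + (i:ℝ) + 1) = Real.Gamma ((i:ℝ) + α + 1) := by ring_nf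
    rw [hG2, hsgn]
    have h1 : ((k-i).factorial : ℝ) ≠ 0 := by positivity
    have h2 : (i.factorial : ℝ) ≠ 0 := by positivity
    have h3 : Real.Gamma ((i:ℝ) + α + 1) ≠ 0 := (Real.Gamma_pos_of_pos hGpos).ne'
    field_simp
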